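/- Let $f, \bar{f}: (0,1) \to (0,\infty)$ be integrable with $f(\alpha)/\bar{f}(\alpha) \to 1$ as $\alpha \to 1$, and let $(\phi_\alpha)$ be a family of admissible spectra with $\phi_\alpha(u) \to 0$ for each $u \in [0,1)$. Set $\bar{M}(\alpha) = \int_0^1 \bar{f}(u)\phi_\alpha(u)\,du$ and assume $\liminf_{\alpha\to 1}\bar{M}(\alpha) > 0$. Then $\int_0^1 f(u)\phi_\alpha(u)\,du \sim \bar{M}(\alpha)$ as $\alpha \to 1$, i.e. their ratio tends to 1. -/

import Mathlib

open MeasureTheory Filter Set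
open scoped Topology

def IsAdmissibleSpectrum (φ : ℝ → ℝ) : Prop :=
  Measurable φ ∧ (∀ u ∈ Set.Ico (0:ℝ) 1, 0 ≤ φ u) ∧
  MonotoneOn φ (Set.Ico 0 1) ∧
  (∀ u ∈ Set.Ico (0:ℝ) 1, ContinuousWithinAt φ (Set.Ici u) u) ∧
  ∫ u in Set.Ioo (0:ℝ) 1, φ u = 1

/-- integrability of `h * ψ` when `ψ` is measurable and bounded on `[0,1)`. -/
lemma aux_int (h : ℝ → ℝ) (hint : IntegrableOn h (Set.Ioo 0 1)) (ψ : ℝ → ℝ)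
    (hmeas : Measurable ψ) (hnn : ∀ u ∈ Set.Ico (0:ℝ) 1, 0 ≤ ψ u)
    (C : ℝ) (hC : ∀ u ∈ Set.Ico (0:ℝ) 1, ψ u ≤ C) :
    IntegrableOn (fun u => h u * ψ u) (Set.Ioo 0 1) := by
  have : IntegrableOn (fun u => ψ u * h u) (Set.Ioo 0 1) := by
    apply Integrable.bdd_mul (c := C) hint
      (hmeas.aestronglyMeasurable.restrict (s := Set.Ioo 0 1))
    refine (ae_restrict_iff' measurableSet_Ioo).2 (ae_of_all _ fun u hu => ?_)
    have hu' : u ∈ Set.Ico (0:ℝ) 1 := ⟨le_of_lt hu.1, hu.2⟩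
    rw [Real.norm_eq_abs, abs_of_nonneg (hnn u hu')]
    exact hC u hu'
  simpa [mul_comm] using this

/-- if `f, f̄ : (0,1) → (0,∞)` are integrable with `f/f̄ → 1` at `1⁻`,
the admissible spectra `φ_α` (bounded on `[0,1)`) converge pointwise to `0` on `[0,1)`,
and `M̄(α) = ∫_0^1 f̄ φ_α` has positive liminf at `1⁻`, then
`∫_0^1 f φ_α ∼ M̄(α)` as `α → 1⁻`. -/
theorem stmt_11 (f fbar : ℝ → ℝ)
    (hfint : IntegrableOn f (Set.Ioo 0 1)) (hfbarint : IntegrableOn fbar (Set.Ioo 0 1))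
    (hfpos : ∀ u ∈ Set.Ioo (0:ℝ) 1, 0 < f u)
    (hfbarpos : ∀ u ∈ Set.Ioo (0:ℝ) 1, 0 < fbar u)
    (hratio : Tendsto (fun α => f α / fbar α) (𝓝[<] (1:ℝ)) (𝓝 1))
    (φ : ℝ → ℝ → ℝ)
    (hφ : ∀ α ∈ Set.Ioo (0:ℝ) 1, IsAdmissibleSpectrum (φ α))
    (hbdd : ∀ α ∈ Set.Ioo (0:ℝ) 1, ∃ C : ℝ, ∀ u ∈ Set.Ico (0:ℝ) 1, φ α u ≤ C)
    (hconv : ∀ u ∈ Set.Ico (0:ℝ) 1,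
      Tendsto (fun α => φ α u) (𝓝[<] (1:ℝ)) (𝓝 0))
    (hM : ∃ c > (0:ℝ), ∀ᶠ α in 𝓝[<] (1:ℝ),
      c ≤ ∫ u in Set.Ioo (0:ℝ) 1, fbar u * φ α u) :
    Tendsto (fun α => (∫ u in Set.Ioo (0:ℝ) 1, f u * φ α u) /
        ∫ u in Set.Ioo (0:ℝ) 1, fbar u * φ α u)
      (𝓝[<] (1:ℝ)) (𝓝 1) := by
  obtain ⟨c, hc, hMc⟩ := hM
  set g : ℝ → ℝ := fun α => ∫ u in Set.Ioo (0:ℝ) 1, f u * φ α u with hg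
  set G : ℝ → ℝ := fun α => ∫ u in Set.Ioo (0:ℝ) 1, fbar u * φ α u with hG
  set K : ℝ := ∫ u in Set.Ioo (0:ℝ) 1, |f u - fbar u| with hK
  have hKnn : 0 ≤ K := setIntegral_nonneg measurableSet_Ioo fun u _ => abs_nonneg _
  have hdiffint : IntegrableOn (fun u => |f u - fbar u|) (Set.Ioo 0 1) :=
    (hfint.sub hfbarint).abs
  rw [Metric.tendsto_nhds]
  intro ε hε
  -- choose δ with the ratio close to 1 on (δ, 1)
  have hrat : ∀ᶠ u in 𝓝[<] (1:ℝ), |f u / fbar u - 1| < ε / 2 := by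
    have := hratio.eventually (Metric.ball_mem_nhds (1:ℝ) (by positivity : (0:ℝ) < ε/2))
    filter_upwards [this] with u hu
    simpa [Real.dist_eq] using hu
  obtain ⟨l, hl1, hl⟩ := mem_nhdsLT_iff_exists_Ioo_subset.1 hrat
  set δ : ℝ := max l 0 with hδdef
  have hδ0 : (0:ℝ) ≤ δ := le_max_right _ _
  have hδ1 : δ < 1 := max_lt hl1 one_pos
  have hδmem : δ ∈ Set.Ico (0:ℝ) 1 := ⟨hδ0, hδ1⟩
  have hsub : Set.Ioo δ 1 ⊆ Set.Ioo l 1 := Set.Ioo_subset_Ioo (le_max_left _ _) le_rfl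
  have hsub0 : Set.Ioo δ 1 ⊆ Set.Ioo (0:ℝ) 1 := Set.Ioo_subset_Ioo (le_max_right _ _) le_rfl
  set η : ℝ := (ε / 2) * c / (K + 1) with hη
  have hηpos : 0 < η := by positivity
  have hev1 : ∀ᶠ α in 𝓝[<] (1:ℝ), φ α δ < η :=
    (hconv δ hδmem).eventually (Filter.Tendsto.eventually_lt_const hηpos tendsto_id) |>.mono
      (fun α h => h)
  have hev2 : ∀ᶠ α in 𝓝[<] (1:ℝ), α ∈ Set.Ioo (0:ℝ) 1 :=
    Ioo_mem_nhdsLT_of_mem ⟨zero_lt_one, le_rfl⟩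
  filter_upwards [hev1, hev2, hMc] with α hφδ hα hGc
  -- unpack admissibility
  obtain ⟨hmeas, hnn, hmono, -, -⟩ := hφ α hα
  obtain ⟨C, hC⟩ := hbdd α hα
  have hGpos : 0 < G α := lt_of_lt_of_le hc hGc
  have hφδnn : 0 ≤ φ α δ := hnn δ hδmem
  -- integrabilities
  have I1 : IntegrableOn (fun u => f u * φ α u) (Set.Ioo 0 1) :=
    aux_int f hfint (φ α) hmeas hnn C hC
  have I2 : IntegrableOn (fun u => fbar u * φ α u) (Set.Ioo 0 1) :=
    aux_int fbar hfbarint (φ α) hmeas hnn C hC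
  have I3 : IntegrableOn (fun u => |f u - fbar u| * φ α u) (Set.Ioo 0 1) :=
    aux_int _ hdiffint (φ α) hmeas hnn C hC
  -- key bound : |g α - G α| ≤ φ α δ * K + ε/2 * G α
  have hsplit : Set.Ioc (0:ℝ) δ ∪ Set.Ioo δ 1 = Set.Ioo (0:ℝ) 1 :=
    Set.Ioc_union_Ioo_eq_Ioo hδ0 hδ1
  have hstep1 : |g α - G α| ≤ ∫ u in Set.Ioo (0:ℝ) 1, |f u - fbar u| * φ α u := by
    have h1 : g α - G α = ∫ u in Set.Ioo (0:ℝ) 1, (f u * φ α u - fbar u * φ α u) :=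
      (integral_sub I1 I2).symm
    rw [h1]
    have habs := norm_integral_le_integral_norm (μ := volume.restrict (Set.Ioo 0 1))
      (fun u => f u * φ α u - fbar u * φ α u)
    simp only [Real.norm_eq_abs] at habs
    refine habs.trans ?_
    refine setIntegral_mono_on ((I1.sub I2).abs) I3 measurableSet_Ioo fun u hu => ?_
    have hu' : u ∈ Set.Ico (0:ℝ) 1 := ⟨le_of_lt hu.1, hu.2⟩
    rw [← sub_mul, abs_mul, abs_of_nonneg (hnn u hu')]
  have hA : (∫ u in Set.Ioc (0:ℝ) δ, |f u - fbar u| * φ α u) ≤ φ α δ * K := by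
    have h1 : (∫ u in Set.Ioc (0:ℝ) δ, |f u - fbar u| * φ α u)
        ≤ ∫ u in Set.Ioc (0:ℝ) δ, |f u - fbar u| * φ α δ := by
      refine setIntegral_mono_on (I3.mono_set (hsplit ▸ Set.subset_union_left))
        ((hdiffint.mono_set (hsplit ▸ Set.subset_union_left)).mul_const _)
        measurableSet_Ioc fun u hu => ?_
      have hu' : u ∈ Set.Ico (0:ℝ) 1 := ⟨le_of_lt hu.1, lt_of_le_of_lt hu.2 hδ1⟩
      exact mul_le_mul_of_nonneg_left (hmono hu' hδmem hu.2) (abs_nonneg _)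
    have h2 : (∫ u in Set.Ioc (0:ℝ) δ, |f u - fbar u| * φ α δ)
        = (∫ u in Set.Ioc (0:ℝ) δ, |f u - fbar u|) * φ α δ := integral_mul_const _ _
    have h3 : (∫ u in Set.Ioc (0:ℝ) δ, |f u - fbar u|) ≤ K := by
      refine setIntegral_mono_set hdiffint
        ((ae_restrict_iff' measurableSet_Ioo).2 (ae_of_all _ fun u _ => abs_nonneg _))
        (HasSubset.Subset.eventuallyLE (hsplit ▸ Set.subset_union_left))
    calc (∫ u in Set.Ioc (0:ℝ) δ, |f u - fbar u| * φ α u)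
        ≤ (∫ u in Set.Ioc (0:ℝ) δ, |f u - fbar u|) * φ α δ := h2 ▸ h1
      _ ≤ K * φ α δ := mul_le_mul_of_nonneg_right h3 hφδnn
      _ = φ α δ * K := mul_comm _ _
  have hB : (∫ u in Set.Ioo δ 1, |f u - fbar u| * φ α u) ≤ ε / 2 * G α := by
    have h1 : (∫ u in Set.Ioo δ 1, |f u - fbar u| * φ α u)
        ≤ ∫ u in Set.Ioo δ 1, ε / 2 * (fbar u * φ α u) := by
      refine setIntegral_mono_on (I3.mono_set hsub0)
        ((I2.mono_set hsub0).const_mul _) measurableSet_Ioo fun u hu => ?_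
      have hu0 : u ∈ Set.Ioo (0:ℝ) 1 := hsub0 hu
      have hub : fbar u > 0 := hfbarpos u hu0
      have hr : |f u / fbar u - 1| < ε / 2 := hl (hsub hu)
      have hfd : |f u - fbar u| ≤ ε / 2 * fbar u := by
        have : f u - fbar u = (f u / fbar u - 1) * fbar u := by
          field_simp
        rw [this, abs_mul, abs_of_pos hub]
        exact mul_le_mul_of_nonneg_right hr.le hub.le
      rw [← mul_assoc]
      exact mul_le_mul_of_nonneg_right hfd (hnn u ⟨hu0.1.le, hu0.2⟩)
    have h2 : (∫ u in Set.Ioo δ 1, ε / 2 * (fbar u * φ α u))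
        = ε / 2 * ∫ u in Set.Ioo δ 1, fbar u * φ α u := integral_const_mul _ _
    have h3 : (∫ u in Set.Ioo δ 1, fbar u * φ α u) ≤ G α := by
      refine setIntegral_mono_set I2
        ((ae_restrict_iff' measurableSet_Ioo).2 (ae_of_all _ fun u hu =>
          mul_nonneg (hfbarpos u hu).le (hnn u ⟨hu.1.le, hu.2⟩)))
        (HasSubset.Subset.eventuallyLE hsub0)
    calc (∫ u in Set.Ioo δ 1, |f u - fbar u| * φ α u)
        ≤ ε / 2 * ∫ u in Set.Ioo δ 1, fbar u * φ α u := h2 ▸ h1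
      _ ≤ ε / 2 * G α := mul_le_mul_of_nonneg_left h3 (by positivity)
  have hkey : |g α - G α| ≤ φ α δ * K + ε / 2 * G α := by
    have hsum : (∫ u in Set.Ioo (0:ℝ) 1, |f u - fbar u| * φ α u)
        = (∫ u in Set.Ioc (0:ℝ) δ, |f u - fbar u| * φ α u)
          + ∫ u in Set.Ioo δ 1, |f u - fbar u| * φ α u := by
      rw [← hsplit]
      exact setIntegral_union (Set.disjoint_left.2
        (fun x hx hx' => absurd hx'.1 (not_lt.2 hx.2))) measurableSet_Ioo
        (I3.mono_set (hsplit ▸ Set.subset_union_left))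
        (I3.mono_set (hsplit ▸ Set.subset_union_right))
    calc |g α - G α| ≤ ∫ u in Set.Ioo (0:ℝ) 1, |f u - fbar u| * φ α u := hstep1
      _ = _ := hsum
      _ ≤ φ α δ * K + ε / 2 * G α := add_le_add hA hB
  -- conclude
  have hφK : φ α δ * K < ε / 2 * c := by
    calc φ α δ * K ≤ φ α δ * (K + 1) :=
          mul_le_mul_of_nonneg_left (by linarith) hφδnn
      _ < η * (K + 1) := by
          exact mul_lt_mul_of_pos_right hφδ (by linarith)
      _ = ε / 2 * c := by
          rw [hη]; field_simp
  have hfinal : |g α - G α| < ε * G α := by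
    have : ε / 2 * c ≤ ε / 2 * G α := mul_le_mul_of_nonneg_left hGc (by positivity)
    calc |g α - G α| ≤ φ α δ * K + ε / 2 * G α := hkey
      _ < ε / 2 * c + ε / 2 * G α := by linarith
      _ ≤ ε / 2 * G α + ε / 2 * G α := by linarith
      _ = ε * G α := by ring
  rw [Real.dist_eq]
  have : g α / G α - 1 = (g α - G α) / G α := by
    field_simp
  rw [this, abs_div, abs_of_pos hGpos, div_lt_iff₀ hGpos]
  linarith [hfinal]
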